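/- For every prime p ≥ 31 there exists t ∈ ℤ/pℤ such that t ∉ {−1, 0, 1, 2, 9}, 2t ≠ 1, and (t(t−1)/p) = ((t−1)(t−9)/p) = −1. -/

import Mathlib

open Finset

section aux

variable {p : ℕ} [Fact p.Prime]

lemma natCast_zmod_ne_zero' (m : ℕ) (h1 : 0 < m) (h2 : m < p) : (m : ZMod p) ≠ 0 := by
  rw [Ne, ZMod.natCast_eq_zero_iff]
  intro h
  exact absurd (Nat.le_of_dvd h1 h) (not_le.mpr h2)

lemma sum_quadChar_shift (hp2 : p ≠ 2) (a : ZMod p) (ha : a ≠ 0) :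
    ∑ t : ZMod p, quadraticChar (ZMod p) (t * (t + a)) = -1 := by
  have hch : ringChar (ZMod p) ≠ 2 := by
    rw [ZMod.ringChar_zmod_n]; exact hp2
  have h0 : (quadraticChar (ZMod p)) ((0 : ZMod p) * (0 + a)) = 0 := by simp
  rw [← Finset.sum_erase (f := fun t => quadraticChar (ZMod p) (t * (t + a))) univ h0]
  have key : ∑ t ∈ univ.erase (0 : ZMod p), quadraticChar (ZMod p) (t * (t + a))
      = ∑ y ∈ univ.erase (1 : ZMod p), quadraticChar (ZMod p) y := by
    refine Finset.sum_nbij' (fun t => 1 + a * t⁻¹) (fun y => a * (y - 1)⁻¹) ?_ ?_ ?_ ?_ ?_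
    · intro t ht
      simp only [mem_erase, mem_univ, and_true] at ht ⊢
      intro h
      have : a * t⁻¹ = 0 := by linear_combination h
      rcases mul_eq_zero.mp this with h' | h'
      · exact ha h'
      · exact ht (inv_eq_zero.mp h')
    · intro y hy
      simp only [mem_erase, mem_univ, and_true] at hy ⊢
      exact mul_ne_zero ha (inv_ne_zero (sub_ne_zero.mpr hy))
    · intro t ht
      simp only [mem_erase, mem_univ, and_true] at ht
      field_simp
      simp [ha]
    · intro y hy
      simp only [mem_erase, mem_univ, and_true] at hy
      have h1 : y - 1 ≠ 0 := sub_ne_zero.mpr hy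
      field_simp
      ring
    · intro t ht
      simp only [mem_erase, mem_univ, and_true] at ht
      have : t * (t + a) = t ^ 2 * (1 + a * t⁻¹) := by field_simp
      rw [this, map_mul, quadraticChar_sq_one' ht, one_mul]
  rw [key, Finset.sum_erase_eq_sub (mem_univ (1 : ZMod p)), quadraticChar_sum_zero hch,
    map_one]
  ring

lemma sum_quadChar_two_roots (hp2 : p ≠ 2) (b c : ZMod p) (h : b ≠ c) :
    ∑ t : ZMod p, quadraticChar (ZMod p) ((t - b) * (t - c)) = -1 := by
  calc ∑ t : ZMod p, quadraticChar (ZMod p) ((t - b) * (t - c))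
      = ∑ x : ZMod p, quadraticChar (ZMod p) ((x + b - b) * (x + b - c)) :=
        (Equiv.sum_comp (Equiv.addRight b)
          (fun t => quadraticChar (ZMod p) ((t - b) * (t - c)))).symm
    _ = ∑ x : ZMod p, quadraticChar (ZMod p) (x * (x + (b - c))) := by
        apply Finset.sum_congr rfl; intro x _; congr 1; ring
    _ = -1 := sum_quadChar_shift hp2 (b - c) (sub_ne_zero.mpr h)

end aux

/-- The Legendre symbol `(a / p)` of an element `a : ZMod p`. -/
def legSym (p : ℕ) [Fact p.Prime] (a : ZMod p) : ℤ := legendreSym p a.val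

lemma legSym_eq_quadChar (p : ℕ) [Fact p.Prime] (a : ZMod p) :
    legSym p a = quadraticChar (ZMod p) a := by
  simp [legSym, legendreSym, ZMod.natCast_val, ZMod.cast_id]

theorem exists_t_for_three_p (p : ℕ) [Fact p.Prime] (hp : 31 ≤ p) :
    ∃ t : ZMod p, t ∉ ({-1, 0, 1, 2, 9} : Set (ZMod p)) ∧ 2 * t ≠ 1 ∧
      legSym p (t * (t - 1)) = -1 ∧ legSym p ((t - 1) * (t - 9)) = -1 := by
  classical
  set χ := quadraticChar (ZMod p) with hχ
  have hp2 : p ≠ 2 := by omega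
  have hne : ∀ m : ℕ, 0 < m → m < 31 → (m : ZMod p) ≠ 0 := fun m h1 h2 =>
    natCast_zmod_ne_zero' m h1 (lt_of_lt_of_le h2 hp)
  have h2z : (2 : ZMod p) ≠ 0 := by exact_mod_cast hne 2 (by norm_num) (by norm_num)
  have h3z : (3 : ZMod p) ≠ 0 := by exact_mod_cast hne 3 (by norm_num) (by norm_num)
  have h8z : (8 : ZMod p) ≠ 0 := by exact_mod_cast hne 8 (by norm_num) (by norm_num)
  have h9z : (9 : ZMod p) ≠ 0 := by exact_mod_cast hne 9 (by norm_num) (by norm_num)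
  have h1z : (1 : ZMod p) ≠ 0 := one_ne_zero
  have h91 : (9 : ZMod p) ≠ 1 := by
    intro h; apply h8z
    have : (8 : ZMod p) = 9 - 1 := by norm_num
    rw [this, h, sub_self]
  -- the excluded points 0, 1, 9
  set E : Finset (ZMod p) := {0, 1, 9} with hE
  set U : Finset (ZMod p) := univ \ E with hU
  have hEcard : E.card = 3 := by
    rw [hE, card_insert_of_notMem (by simp [h1z.symm, h9z.symm]),
      card_insert_of_notMem (by simp [h91.symm]), card_singleton]
  have hUcard : U.card = p - 3 := by
    rw [hU, card_sdiff_of_subset (subset_univ _), card_univ, ZMod.card, hEcard]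
  -- sums over the triple E
  have sumE : ∀ f : ZMod p → ℤ, ∑ t ∈ E, f t = f 0 + f 1 + f 9 := by
    intro f
    rw [hE, sum_insert (by simp [h1z.symm, h9z.symm]), sum_insert (by simp [h91.symm]),
      sum_singleton, add_assoc]
  have sumU : ∀ f : ZMod p → ℤ, ∑ t ∈ U, f t = ∑ t : ZMod p, f t - (f 0 + f 1 + f 9) := by
    intro f
    rw [hU, Finset.sum_sdiff_eq_sub (subset_univ _), sumE]
  -- the three character sums
  have SA : ∑ t ∈ U, χ (t * (t - 1)) = -1 - χ 72 := by
    rw [sumU]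
    have htot : ∑ t : ZMod p, χ (t * (t - 1)) = -1 := by
      have := sum_quadChar_two_roots hp2 (0 : ZMod p) 1 h1z.symm
      rw [← this]; apply Finset.sum_congr rfl; intro x _; rw [sub_zero]
    rw [htot]
    have e0 : ((0 : ZMod p)) * (0 - 1) = 0 := by norm_num
    have e1 : ((1 : ZMod p)) * (1 - 1) = 0 := by norm_num
    have e9 : ((9 : ZMod p)) * (9 - 1) = 72 := by norm_num
    rw [e0, e1, e9, hχ, quadraticChar_zero]
    ring
  have SB : ∑ t ∈ U, χ ((t - 1) * (t - 9)) = -2 := by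
    rw [sumU]
    have htot : ∑ t : ZMod p, χ ((t - 1) * (t - 9)) = -1 :=
      sum_quadChar_two_roots hp2 1 9 h91.symm
    rw [htot]
    have e0 : ((0 : ZMod p) - 1) * (0 - 9) = 3 ^ 2 := by ring
    have e1 : ((1 : ZMod p) - 1) * (1 - 9) = 0 := by norm_num
    have e9 : ((9 : ZMod p) - 1) * (9 - 9) = 0 := by norm_num
    rw [e0, e1, e9, hχ, quadraticChar_sq_one' h3z, quadraticChar_zero]
    ring
  have SC : ∑ t ∈ U, χ (t * (t - 9)) = -1 - χ (-8) := by
    rw [sumU]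
    have htot : ∑ t : ZMod p, χ (t * (t - 9)) = -1 := by
      have := sum_quadChar_two_roots hp2 (0 : ZMod p) 9 h9z.symm
      rw [← this]; apply Finset.sum_congr rfl; intro x _; rw [sub_zero]
    rw [htot]
    have e0 : ((0 : ZMod p)) * (0 - 9) = 0 := by norm_num
    have e1 : ((1 : ZMod p)) * (1 - 9) = -8 := by norm_num
    have e9 : ((9 : ZMod p)) * (9 - 9) = 0 := by norm_num
    rw [e0, e1, e9, hχ, quadraticChar_zero]
    ring
  -- the predicate we want
  set P : ZMod p → Prop := fun t => χ (t * (t - 1)) = -1 ∧ χ ((t - 1) * (t - 9)) = -1 with hP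
  have hmemU : ∀ t : ZMod p, t ∈ U ↔ t ≠ 0 ∧ t ≠ 1 ∧ t ≠ 9 := by
    intro t
    rw [hU, Finset.mem_sdiff, hE]
    simp [and_assoc]
  have hAne : ∀ t ∈ U, t * (t - 1) ≠ 0 := by
    intro t ht
    rw [hmemU] at ht
    exact mul_ne_zero ht.1 (sub_ne_zero.mpr ht.2.1)
  have hBne : ∀ t ∈ U, (t - 1) * (t - 9) ≠ 0 := by
    intro t ht
    rw [hmemU] at ht
    exact mul_ne_zero (sub_ne_zero.mpr ht.2.1) (sub_ne_zero.mpr ht.2.2)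
  have hS1 : ∑ t ∈ U, (1 - χ (t * (t - 1))) * (1 - χ ((t - 1) * (t - 9)))
      = (p : ℤ) - 1 + χ 72 - χ (-8) := by
    have expand : ∀ t ∈ U, (1 - χ (t * (t - 1))) * (1 - χ ((t - 1) * (t - 9)))
        = 1 - χ (t * (t - 1)) - χ ((t - 1) * (t - 9)) + χ (t * (t - 9)) := by
      intro t ht
      rw [hmemU] at ht
      have hmul : χ (t * (t - 1)) * χ ((t - 1) * (t - 9)) = χ (t * (t - 9)) := by
        rw [← map_mul]
        have e : (t * (t - 1)) * ((t - 1) * (t - 9)) = (t * (t - 9)) * (t - 1) ^ 2 := by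
          ring
        rw [e, map_mul, hχ, quadraticChar_sq_one' (sub_ne_zero.mpr ht.2.1), mul_one]
      linear_combination hmul
    rw [Finset.sum_congr rfl expand]
    rw [Finset.sum_add_distrib, Finset.sum_sub_distrib, Finset.sum_sub_distrib, SA, SB, SC,
      Finset.sum_const, hUcard, nsmul_eq_mul, mul_one]
    have : ((p - 3 : ℕ) : ℤ) = (p : ℤ) - 3 := by
      have : (31 : ℤ) ≤ (p : ℤ) := by exact_mod_cast hp
      push_cast [Nat.cast_sub (by omega : 3 ≤ p)]
      ring
    rw [this]
    ring
  have hS2 : ∑ t ∈ U, (1 - χ (t * (t - 1))) * (1 - χ ((t - 1) * (t - 9)))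
      = 4 * (((U.filter P).card : ℤ)) := by
    have step : ∀ t ∈ U, (1 - χ (t * (t - 1))) * (1 - χ ((t - 1) * (t - 9)))
        = if P t then (4 : ℤ) else 0 := by
      intro t ht
      by_cases hPt : P t
      · rw [if_pos hPt]
        obtain ⟨hA, hB⟩ := hPt
        rw [hA, hB]; ring
      · rw [if_neg hPt]
        have hA := quadraticChar_dichotomy (hAne t ht)
        have hB := quadraticChar_dichotomy (hBne t ht)
        rw [← hχ] at hA hB
        rcases hA with hA | hA
        · rw [hA]; ring
        · rcases hB with hB | hB
          · rw [hB]; ring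
          · exact absurd ⟨hA, hB⟩ hPt
    rw [Finset.sum_congr rfl step, ← Finset.sum_filter, Finset.sum_const, nsmul_eq_mul]
    ring
  have h72 : (72 : ZMod p) ≠ 0 := by
    have e : (72 : ZMod p) = 8 * 9 := by norm_num
    rw [e]; exact mul_ne_zero h8z h9z
  have hb1 : χ 72 = 1 ∨ χ 72 = -1 := quadraticChar_dichotomy h72
  have hb2 : χ (-8) = 1 ∨ χ (-8) = -1 := quadraticChar_dichotomy (neg_ne_zero.mpr h8z)
  have hcard : 7 ≤ (U.filter P).card := by
    have heq : 4 * (((U.filter P).card : ℤ)) = (p : ℤ) - 1 + χ 72 - χ (-8) := by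
      rw [← hS2, hS1]
    have hple : (31 : ℤ) ≤ (p : ℤ) := by exact_mod_cast hp
    rcases hb1 with h | h <;> rcases hb2 with h' | h' <;> rw [h, h'] at heq <;> omega
  set V : Finset (ZMod p) := {-1, 2, (2 : ZMod p)⁻¹} with hV
  have hVcard : V.card ≤ 3 := by
    refine le_trans (card_insert_le _ _) ?_
    refine le_trans (Nat.add_le_add_right (card_insert_le _ _) 1) ?_
    simp
  have hT : ((U.filter P) \ V).Nonempty := by
    rw [← Finset.card_pos]
    have h1 := Finset.card_le_card_sdiff_add_card (s := U.filter P) (t := V)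
    omega
  obtain ⟨t, ht⟩ := hT
  rw [Finset.mem_sdiff, Finset.mem_filter] at ht
  obtain ⟨⟨htU, hPA, hPB⟩, htV⟩ := ht
  rw [hmemU] at htU
  rw [hV] at htV
  simp only [Finset.mem_insert, Finset.mem_singleton, not_or] at htV
  refine ⟨t, ?_, ?_, ?_, ?_⟩
  · simp only [Set.mem_insert_iff, Set.mem_singleton_iff, not_or]
    exact ⟨htV.1, htU.1, htU.2.1, htV.2.1, htU.2.2⟩
  · intro h
    exact htV.2.2 (eq_inv_of_mul_eq_one_left (by rw [mul_comm] at h; exact h))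
  · rw [legSym_eq_quadChar]; exact hPA
  · rw [legSym_eq_quadChar]; exact hPB
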